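/- arXiv:2605.25495 — 2 statements merged into one kernel-verified Lean document; each statement's English description precedes it below -/
import Mathlib

section
/- Let M be a real d×d matrix with ‖M‖_F² ≥ D and largest singular value σ_1(M) ≤ S (with S > 0). If Δ is a real d×d matrix with rank(Δ) ≤ r and ‖M − Δ‖_F ≤ ε, then r ≥ (D − ε²)/S². In particular, a larger required misalignment D forces a proportionally larger rank r for any ε-accurate low-rank approximation. -/
open scoped BigOperators

/-- Frobenius norm of a real matrix. -/
noncomputable def frobNorm {m n : ℕ} (M : Matrix (Fin m) (Fin n) ℝ) : ℝ :=
  Real.sqrt (∑ i, ∑ j, (M i j) ^ 2)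

/-- Singular values of a real `d × d` matrix, listed in decreasing order:
the square roots of the eigenvalues of `Mᵀ * M`, sorted decreasingly
(index `0` is the largest singular value `σ₁`). -/
noncomputable def singularValues {d : ℕ} (M : Matrix (Fin d) (Fin d) ℝ) : Fin d → ℝ :=
  fun i =>
    Real.sqrt
      (((Matrix.isHermitian_conjTranspose_mul_self M).eigenvalues ∘
          Tuple.sort ((Matrix.isHermitian_conjTranspose_mul_self M).eigenvalues)) i.rev)

/-- Condition number of a Hermitian (e.g. positive definite) real matrix:
ratio of its largest to its smallest eigenvalue. -/
noncomputable def condNumber {d : ℕ} (A : Matrix (Fin d) (Fin d) ℝ)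
    (hA : A.IsHermitian) : ℝ :=
  (⨆ i, hA.eigenvalues i) / (⨅ i, hA.eigenvalues i)

/-! ### Auxiliary material -/

open Matrix

/-- Explicit coercion from plain functions to Euclidean space. -/
noncomputable def toE {d : ℕ} (x : Fin d → ℝ) : EuclideanSpace ℝ (Fin d) :=
  (WithLp.equiv 2 (Fin d → ℝ)).symm x

open Matrix in
private lemma euclid_dot_eq_inner {d : ℕ} (x y : EuclideanSpace ℝ (Fin d)) :
    (x : Fin d → ℝ) ⬝ᵥ (y : Fin d → ℝ) = inner ℝ x y := by
  simp [dotProduct, PiLp.inner_apply, RCLike.inner_apply, mul_comm]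

open Matrix in
private lemma rayleigh_aux {d : ℕ} (N : Matrix (Fin d) (Fin d) ℝ)
    (hN : N.IsHermitian) {lam : ℝ} (hlam : ∀ i, hN.eigenvalues i ≤ lam)
    (v : EuclideanSpace ℝ (Fin d)) :
    (v : Fin d → ℝ) ⬝ᵥ (N *ᵥ v) ≤ lam * ‖v‖ ^ 2 := by
  classical
  set b := hN.eigenvectorBasis with hb
  set T := Matrix.toEuclideanLin N with hT
  have hsym : (Matrix.toEuclideanLin N).IsSymmetric :=
    (Matrix.isHermitian_iff_isSymmetric).1 hN
  have hTb : ∀ i, T (b i) = hN.eigenvalues i • b i := by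
    intro i
    have h := hN.mulVec_eigenvectorBasis i
    apply PiLp.ext
    intro j
    have h2 : (N *ᵥ ⇑(b i)) j = (hN.eigenvalues i • ⇑(b i)) j := by rw [h]
    simpa [hT, Matrix.ofLp_toEuclideanLin_apply] using h2
  have hdot : (v : Fin d → ℝ) ⬝ᵥ (N *ᵥ v) = inner ℝ v (T v) := by
    exact euclid_dot_eq_inner v (T v)
  rw [hdot]
  have h1 : (inner ℝ v (T v) : ℝ) = ∑ i, (inner ℝ v (b i) : ℝ) * (inner ℝ (b i) (T v) : ℝ) :=
    (b.sum_inner_mul_inner v (T v)).symm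
  have h2 : ∀ i, (inner ℝ (b i) (T v) : ℝ) = hN.eigenvalues i * (inner ℝ (b i) v : ℝ) := by
    intro i
    rw [← hsym (b i) v, hTb i, inner_smul_left]
    simp
  have h3 : (inner ℝ v v : ℝ) = ∑ i, (inner ℝ v (b i) : ℝ) * (inner ℝ (b i) v : ℝ) :=
    (b.sum_inner_mul_inner v v).symm
  calc (inner ℝ v (T v) : ℝ) = ∑ i, hN.eigenvalues i * ((inner ℝ (b i) v : ℝ))^2 := by
        rw [h1]; refine Finset.sum_congr rfl fun i _ => ?_
        rw [h2 i, real_inner_comm v (b i)]; ring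
    _ ≤ ∑ i, lam * ((inner ℝ (b i) v : ℝ))^2 := by
        refine Finset.sum_le_sum fun i _ => ?_
        exact mul_le_mul_of_nonneg_right (hlam i) (sq_nonneg _)
    _ = lam * ∑ i, ((inner ℝ (b i) v : ℝ))^2 := by rw [Finset.mul_sum]
    _ = lam * ‖v‖ ^ 2 := by
        rw [← real_inner_self_eq_norm_sq, h3]
        congr 1
        refine Finset.sum_congr rfl fun i _ => ?_
        rw [real_inner_comm v (b i)]; ring

open Matrix in
private lemma opnorm_aux {d : ℕ} (M : Matrix (Fin d) (Fin d) ℝ) {lam : ℝ} (hlam0 : 0 ≤ lam)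
    (hray : ∀ v : EuclideanSpace ℝ (Fin d), (v : Fin d → ℝ) ⬝ᵥ ((Mᵀ * M) *ᵥ v) ≤ lam * ‖v‖ ^ 2)
    (u : EuclideanSpace ℝ (Fin d)) (hu : ‖u‖ = 1) :
    (Mᵀ *ᵥ (u : Fin d → ℝ)) ⬝ᵥ (Mᵀ *ᵥ (u : Fin d → ℝ)) ≤ lam := by
  set w : EuclideanSpace ℝ (Fin d) := WithLp.toLp 2 (Mᵀ *ᵥ (u : Fin d → ℝ)) with hw
  set mv : EuclideanSpace ℝ (Fin d) := WithLp.toLp 2 (M *ᵥ (w : Fin d → ℝ)) with hmv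
  set t : ℝ := (w : Fin d → ℝ) ⬝ᵥ (w : Fin d → ℝ) with ht
  have ht0 : 0 ≤ t := by
    rw [ht, euclid_dot_eq_inner]; exact real_inner_self_nonneg
  have hwn : ‖w‖ ^ 2 = t := by
    rw [ht, euclid_dot_eq_inner, real_inner_self_eq_norm_sq]
  have h1 : t = (mv : Fin d → ℝ) ⬝ᵥ (u : Fin d → ℝ) := by
    rw [ht]
    nth_rewrite 2 [hw]
    rw [WithLp.ofLp_toLp, Matrix.dotProduct_mulVec, Matrix.vecMul_transpose, hmv, WithLp.ofLp_toLp]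
  have hMw : (mv : Fin d → ℝ) ⬝ᵥ (mv : Fin d → ℝ) ≤ lam * t := by
    have := hray w
    rw [← Matrix.mulVec_mulVec, Matrix.dotProduct_mulVec, Matrix.vecMul_transpose, hwn] at this
    exact this
  have hMwnorm : ‖mv‖ ^ 2 ≤ lam * t := by
    rw [← real_inner_self_eq_norm_sq, ← euclid_dot_eq_inner]
    exact hMw
  have h2 : t ≤ ‖mv‖ := by
    calc t = inner ℝ mv u := by rw [h1, euclid_dot_eq_inner]
      _ ≤ ‖mv‖ * ‖u‖ := real_inner_le_norm _ _
      _ = ‖mv‖ := by rw [hu, mul_one]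
  have h3 : t ^ 2 ≤ lam * t := by
    calc t ^ 2 ≤ ‖mv‖ ^ 2 := pow_le_pow_left₀ ht0 h2 2
      _ ≤ lam * t := hMwnorm
  change t ≤ lam
  rcases eq_or_lt_of_le ht0 with h | h
  · rw [← h]; exact hlam0
  · nlinarith

private lemma frob_sq {d : ℕ} (A : Matrix (Fin d) (Fin d) ℝ) :
    frobNorm A ^ 2 = ∑ j, ‖toE (Aᵀ j)‖ ^ 2 := by
  have h0 : (0:ℝ) ≤ ∑ i, ∑ j, (A i j) ^ 2 := by positivity
  rw [frobNorm, Real.sq_sqrt h0, Finset.sum_comm]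
  refine Finset.sum_congr rfl fun j _ => ?_
  rw [EuclideanSpace.norm_eq, Real.sq_sqrt (by positivity)]
  refine Finset.sum_congr rfl fun i _ => ?_
  rw [Real.norm_eq_abs, sq_abs]
  rfl

private lemma frobNorm_nonneg {d : ℕ} (A : Matrix (Fin d) (Fin d) ℝ) : 0 ≤ frobNorm A :=
  Real.sqrt_nonneg _

/-- If ‖M‖_F² ≥ D and the largest singular value of M is at most
S > 0, then any rank-≤r matrix Δ with ‖M − Δ‖_F ≤ ε satisfies r ≥ (D − ε²)/S². -/
theorem rank_lower_bound_of_misalignment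
    {d : ℕ} (hd : 0 < d) (M : Matrix (Fin d) (Fin d) ℝ)
    (D S : ℝ) (hS : 0 < S)
    (hD : D ≤ frobNorm M ^ 2)
    (hσ : singularValues M ⟨0, hd⟩ ≤ S)
    (r : ℕ) (ε : ℝ) (Δ : Matrix (Fin d) (Fin d) ℝ)
    (hΔ : Δ.rank ≤ r) (herr : frobNorm (M - Δ) ≤ ε) :
    (D - ε ^ 2) / S ^ 2 ≤ (r : ℝ) := by
  classical
  have hA := Matrix.isHermitian_conjTranspose_mul_self M
  set eig := hA.eigenvalues with heig
  set lam := (eig ∘ Tuple.sort eig) (Fin.rev ⟨0, hd⟩) with hlamdef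
  have hmono : Monotone (eig ∘ Tuple.sort eig) := Tuple.monotone_sort eig
  have hlam : ∀ i, eig i ≤ lam := by
    intro i
    have hi : i = (Tuple.sort eig) ((Tuple.sort eig).symm i) := (Equiv.apply_symm_apply _ _).symm
    rw [hi]
    refine hmono ?_
    have h2 : ((Tuple.sort eig).symm i).val < d := ((Tuple.sort eig).symm i).isLt
    have h3 : ((⟨0, hd⟩ : Fin d) : ℕ) = 0 := rfl
    rw [Fin.le_def, Fin.val_rev, h3]
    omega
  have hlam0 : 0 ≤ lam :=
    Matrix.eigenvalues_conjTranspose_mul_self_nonneg M _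
  have hσ1 : Real.sqrt lam ≤ S := hσ
  have hlamS : lam ≤ S ^ 2 := by
    calc lam = Real.sqrt lam ^ 2 := (Real.sq_sqrt hlam0).symm
      _ ≤ S ^ 2 := pow_le_pow_left₀ (Real.sqrt_nonneg _) hσ1 2
  have hray : ∀ v : EuclideanSpace ℝ (Fin d),
      (v : Fin d → ℝ) ⬝ᵥ ((Mᵀ * M) *ᵥ v) ≤ lam * ‖v‖ ^ 2 := by
    intro v
    have h := rayleigh_aux (Mᴴ * M) hA hlam v
    have hH : Mᴴ = Mᵀ := Matrix.conjTranspose_eq_transpose_of_trivial M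
    rwa [hH] at h
  -- columns
  set cM : Fin d → EuclideanSpace ℝ (Fin d) := fun j => toE (Mᵀ j) with hcM
  set cΔ : Fin d → EuclideanSpace ℝ (Fin d) := fun j => toE (Δᵀ j) with hcΔ
  set W : Submodule ℝ (EuclideanSpace ℝ (Fin d)) := Submodule.span ℝ (Set.range cΔ) with hW
  -- rank bound on W
  have hWrank : Module.finrank ℝ W ≤ r := by
    have e := WithLp.linearEquiv 2 ℝ (Fin d → ℝ)
    have hmap : W.map (EuclideanSpace.equiv (Fin d) ℝ).toLinearEquiv.toLinearMap =
        Submodule.span ℝ (Set.range Δᵀ) := by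
      rw [hW, Submodule.map_span]
      congr 1
      rw [← Set.range_comp]
      rfl
    have h1 : Module.finrank ℝ W = Δ.rank := by
      rw [Matrix.rank_eq_finrank_span_cols, show Set.range Δ.col = Set.range Δᵀ from rfl, ← hmap]
      exact (LinearEquiv.finrank_map_eq _ _).symm
    omega
  have hΔW : ∀ j, cΔ j ∈ W := fun j => Submodule.subset_span ⟨j, rfl⟩
  -- Pythagoras
  have hpyth : ∀ x : EuclideanSpace ℝ (Fin d),
      ‖x‖ ^ 2 = ‖(W.orthogonalProjectionOnto x : EuclideanSpace ℝ (Fin d))‖ ^ 2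
        + ‖x - (W.orthogonalProjectionOnto x : EuclideanSpace ℝ (Fin d))‖ ^ 2 := by
    intro x
    have h := Submodule.norm_sq_eq_add_norm_sq_projection x W
    have e1 : ‖W.orthogonalProjectionOnto x‖
        = ‖(W.orthogonalProjectionOnto x : EuclideanSpace ℝ (Fin d))‖ :=
      (Submodule.norm_coe _).symm
    have e2 : ‖Wᗮ.orthogonalProjectionOnto x‖
        = ‖(Wᗮ.orthogonalProjectionOnto x : EuclideanSpace ℝ (Fin d))‖ :=
      (Submodule.norm_coe _).symm
    have h4 : ((Wᗮ.orthogonalProjectionOnto x : EuclideanSpace ℝ (Fin d)))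
        = x - (W.orthogonalProjectionOnto x : EuclideanSpace ℝ (Fin d)) :=
      congrArg Subtype.val (Submodule.orthogonalProjectionOnto_orthogonal (K := W) x)
    rw [e1, e2, h4] at h
    exact h
  -- minimality
  have hmin : ∀ j, ‖cM j - (W.orthogonalProjectionOnto (cM j) : EuclideanSpace ℝ (Fin d))‖ ≤ ‖cM j - cΔ j‖ := by
    intro j
    refine (Submodule.starProjection_minimal (U := W) (cM j)).trans_le ?_
    have hbdd : BddBelow (Set.range fun v : W => ‖cM j - (v : EuclideanSpace ℝ (Fin d))‖) := by
      refine ⟨0, ?_⟩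
      rintro y ⟨v, rfl⟩
      exact norm_nonneg _
    exact ciInf_le hbdd (⟨cΔ j, hΔW j⟩ : W)
  -- Parseval-type bound for the projected part
  set s := Module.finrank ℝ W with hs
  set b := stdOrthonormalBasis ℝ W with hbW
  have hproj_eq : ∀ x : EuclideanSpace ℝ (Fin d),
      ‖(W.orthogonalProjectionOnto x : EuclideanSpace ℝ (Fin d))‖ ^ 2 =
        ∑ k, (inner ℝ ((b k : EuclideanSpace ℝ (Fin d))) x : ℝ) ^ 2 := by
    intro x
    rw [Submodule.norm_coe, ← real_inner_self_eq_norm_sq,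
      ← OrthonormalBasis.sum_inner_mul_inner b (W.orthogonalProjectionOnto x)
        (W.orthogonalProjectionOnto x)]
    refine Finset.sum_congr rfl fun k _ => ?_
    rw [Submodule.inner_orthogonalProjection_eq_of_mem_left,
      real_inner_comm (b k) (W.orthogonalProjectionOnto x),
      Submodule.inner_orthogonalProjection_eq_of_mem_left]
    ring
  have hcol_inner : ∀ (u : EuclideanSpace ℝ (Fin d)) (j : Fin d),
      (inner ℝ u (cM j) : ℝ) = (Mᵀ *ᵥ (u : Fin d → ℝ)) j := by
    intro u j
    rw [← euclid_dot_eq_inner, Matrix.mulVec_transpose]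
    simp [dotProduct, Matrix.vecMul, toE, cM]
  have hrowsum : ∀ u : EuclideanSpace ℝ (Fin d), ‖u‖ = 1 →
      ∑ j, (inner ℝ u (cM j) : ℝ) ^ 2 ≤ lam := by
    intro u hu
    have h := opnorm_aux M hlam0 hray u hu
    calc ∑ j, (inner ℝ u (cM j) : ℝ) ^ 2
        = (Mᵀ *ᵥ (u : Fin d → ℝ)) ⬝ᵥ (Mᵀ *ᵥ (u : Fin d → ℝ)) := by
          rw [dotProduct]
          refine Finset.sum_congr rfl fun j _ => ?_
          rw [hcol_inner u j]; ring
      _ ≤ lam := h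
  have hfirst : ∑ j, ‖(W.orthogonalProjectionOnto (cM j) : EuclideanSpace ℝ (Fin d))‖ ^ 2 ≤ (r : ℝ) * S ^ 2 := by
    calc ∑ j, ‖(W.orthogonalProjectionOnto (cM j) : EuclideanSpace ℝ (Fin d))‖ ^ 2
        = ∑ j, ∑ k, (inner ℝ ((b k : EuclideanSpace ℝ (Fin d))) (cM j) : ℝ) ^ 2 := by
          exact Finset.sum_congr rfl fun j _ => hproj_eq (cM j)
      _ = ∑ k, ∑ j, (inner ℝ ((b k : EuclideanSpace ℝ (Fin d))) (cM j) : ℝ) ^ 2 :=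
          Finset.sum_comm
      _ ≤ ∑ _k : Fin s, lam := by
          refine Finset.sum_le_sum fun k _ => ?_
          refine hrowsum _ ?_
          rw [Submodule.norm_coe]
          exact b.orthonormal.1 k
      _ = (s : ℝ) * lam := by
          rw [Finset.sum_const, Finset.card_univ, Fintype.card_fin, nsmul_eq_mul]
      _ ≤ (r : ℝ) * S ^ 2 := by
          apply mul_le_mul _ hlamS hlam0 (Nat.cast_nonneg _)
          exact_mod_cast hWrank
  -- error part
  have hε0 : 0 ≤ ε := le_trans (frobNorm_nonneg _) herr
  have hsecond : ∑ j, ‖cM j - cΔ j‖ ^ 2 ≤ ε ^ 2 := by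
    have hMD : ∀ j, cM j - cΔ j = toE ((M - Δ)ᵀ j) := by
      intro j
      apply PiLp.ext
      intro i
      simp [cM, cΔ, toE, Matrix.sub_apply]
    calc ∑ j, ‖cM j - cΔ j‖ ^ 2 = ∑ j, ‖toE ((M - Δ)ᵀ j)‖ ^ 2 := by
          refine Finset.sum_congr rfl fun j _ => ?_
          rw [hMD j]
      _ = frobNorm (M - Δ) ^ 2 := (frob_sq _).symm
      _ ≤ ε ^ 2 := pow_le_pow_left₀ (frobNorm_nonneg _) herr 2
  -- combine
  have hmain : D ≤ (r : ℝ) * S ^ 2 + ε ^ 2 := by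
    calc D ≤ frobNorm M ^ 2 := hD
      _ = ∑ j, ‖cM j‖ ^ 2 := frob_sq M
      _ = ∑ j, (‖(W.orthogonalProjectionOnto (cM j) : EuclideanSpace ℝ (Fin d))‖ ^ 2
            + ‖cM j - (W.orthogonalProjectionOnto (cM j) : EuclideanSpace ℝ (Fin d))‖ ^ 2) := by
          exact Finset.sum_congr rfl fun j _ => hpyth (cM j)
      _ = (∑ j, ‖(W.orthogonalProjectionOnto (cM j) : EuclideanSpace ℝ (Fin d))‖ ^ 2)
            + ∑ j, ‖cM j - (W.orthogonalProjectionOnto (cM j) : EuclideanSpace ℝ (Fin d))‖ ^ 2 :=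
          Finset.sum_add_distrib
      _ ≤ (r : ℝ) * S ^ 2 + ε ^ 2 := by
          refine add_le_add hfirst (le_trans ?_ hsecond)
          refine Finset.sum_le_sum fun j _ => ?_
          exact pow_le_pow_left₀ (norm_nonneg _) (hmin j) 2
  rw [div_le_iff₀ (by positivity)]
  linarith
end

section
/- Let X, Y ∈ ℝ^{d×n} be nonzero matrices with XXᵀ and YYᵀ positive definite, let ρ = ‖XYᵀ‖_F² / (‖XXᵀ‖_F · ‖YYᵀ‖_F) be their linear CKA, let κ(XXᵀ), κ(YYᵀ) be the condition numbers of the feature covariances, let W* = Y Xᵀ (X Xᵀ)⁻¹ be the optimal linear aligner, and assume the largest singular value of W* − I is at most S > 0 and that ‖W* − I‖_F² ≥ d·(1 − ρ)/(κ(XXᵀ)·κ(YYᵀ)). Then for every ε > 0, any matrix Δ with rank(Δ) ≤ r and ‖(W* − I) − Δ‖_F ≤ ε satisfies r ≥ (d·(1 − ρ)/(κ(XXᵀ)·κ(YYᵀ)) − ε²)/S². Hence layers whose representations have lower CKA similarity ρ with the source domain require a higher rank r to achieve a given approximation fidelity ε. -/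
open scoped BigOperators
open Matrix

open scoped BigOperators
open Matrix

section CKAHelpers

variable {d : ℕ}

/-- cross sum as trace -/
lemma crossSum_eq_trace (A B : Matrix (Fin d) (Fin d) ℝ) :
    ∑ i, ∑ j, A i j * B i j = (Aᵀ * B).trace := by
  rw [Matrix.trace]
  simp only [Matrix.diag, Matrix.mul_apply, Matrix.transpose_apply]
  rw [Finset.sum_comm]

/-- Pythagoras for a symmetric idempotent `P`. -/
lemma pythag (P : Matrix (Fin d) (Fin d) ℝ) (hPt : Pᵀ = P) (hPP : P * P = P)
    (M : Matrix (Fin d) (Fin d) ℝ) :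
    ∑ i, ∑ j, (M i j) ^ 2 =
      (∑ i, ∑ j, ((P * M) i j) ^ 2) + ∑ i, ∑ j, ((M - P * M) i j) ^ 2 := by
  have h1 : P * (M - P * M) = 0 := by
    rw [Matrix.mul_sub, ← Matrix.mul_assoc, hPP, sub_self]
  have h0 : (P * M)ᵀ * (M - P * M) = 0 := by
    rw [Matrix.transpose_mul, hPt, Matrix.mul_assoc, h1, Matrix.mul_zero]
  have hcross : ∑ i, ∑ j, (P * M) i j * (M - P * M) i j = 0 := by
    rw [crossSum_eq_trace, h0, Matrix.trace_zero]
  have expand : ∀ i j, (M i j) ^ 2 =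
      ((P * M) i j) ^ 2 + ((M - P * M) i j) ^ 2 +
        2 * ((P * M) i j * (M - P * M) i j) := by
    intro i j
    have h : (M - P * M) i j = M i j - (P * M) i j := by simp
    rw [h]; ring
  calc ∑ i, ∑ j, (M i j) ^ 2
      = ∑ i, ∑ j, (((P * M) i j) ^ 2 + ((M - P * M) i j) ^ 2 +
          2 * ((P * M) i j * (M - P * M) i j)) := by
        exact Finset.sum_congr rfl fun i _ => Finset.sum_congr rfl fun j _ => expand i j
    _ = (∑ i, ∑ j, ((P * M) i j) ^ 2) + (∑ i, ∑ j, ((M - P * M) i j) ^ 2) +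
          2 * ∑ i, ∑ j, (P * M) i j * (M - P * M) i j := by
        simp [Finset.sum_add_distrib, Finset.mul_sum]
    _ = _ := by rw [hcross]; ring



/-- If all eigenvalues of `EᵀE` are at most `S²`, then `‖E v‖² ≤ S² ‖v‖²`. -/
lemma opNorm_bound {E : Matrix (Fin d) (Fin d) ℝ} {S : ℝ}
    (hev : ∀ i, (Matrix.isHermitian_conjTranspose_mul_self E).eigenvalues i ≤ S ^ 2) :
    ∀ v : Fin d → ℝ, ∑ j, ((E *ᵥ v) j) ^ 2 ≤ S ^ 2 * ∑ j, (v j) ^ 2 := by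
  have hA : (Eᵀ * E).IsHermitian := Matrix.isHermitian_conjTranspose_mul_self E
  have key : (S ^ 2 • (1 : Matrix (Fin d) (Fin d) ℝ) - Eᵀ * E) =
      (hA.eigenvectorUnitary : Matrix (Fin d) (Fin d) ℝ) *
        Matrix.diagonal (fun i => S ^ 2 - hA.eigenvalues i) *
        star (hA.eigenvectorUnitary : Matrix (Fin d) (Fin d) ℝ) := by
    have hUU : (hA.eigenvectorUnitary : Matrix (Fin d) (Fin d) ℝ) *
        star (hA.eigenvectorUnitary : Matrix (Fin d) (Fin d) ℝ) = 1 :=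
      Matrix.mem_unitaryGroup_iff.mp hA.eigenvectorUnitary.2
    have hdiag : Matrix.diagonal (fun i => S ^ 2 - hA.eigenvalues i) =
        S ^ 2 • (1 : Matrix (Fin d) (Fin d) ℝ) -
          Matrix.diagonal (RCLike.ofReal ∘ hA.eigenvalues) := by
      ext i j
      rcases eq_or_ne i j with rfl | h
      · simp [Matrix.diagonal_apply_eq, Matrix.one_apply_eq]
      · simp [Matrix.diagonal_apply_ne _ h, Matrix.one_apply_ne h]
    rw [hdiag, Matrix.mul_sub, Matrix.sub_mul]
    congr 1
    · rw [Matrix.mul_smul, Matrix.mul_one, Matrix.smul_mul, hUU]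
    · exact hA.spectral_theorem
  have hpsd : (S ^ 2 • (1 : Matrix (Fin d) (Fin d) ℝ) - Eᵀ * E).PosSemidef := by
    rw [key]
    exact (Matrix.posSemidef_diagonal_iff.mpr fun i => sub_nonneg.mpr (hev i)).mul_mul_conjTranspose_same _
  intro v
  have h := hpsd.dotProduct_mulVec_nonneg v
  have hstar : star v = v := by funext i; simp
  rw [hstar, Matrix.sub_mulVec, dotProduct_sub, Matrix.smul_mulVec,
    Matrix.one_mulVec, dotProduct_smul, ← Matrix.mulVec_mulVec,
    Matrix.dotProduct_mulVec v, Matrix.vecMul_transpose] at h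
  have h1 : (E *ᵥ v) ⬝ᵥ (E *ᵥ v) = ∑ j, ((E *ᵥ v) j) ^ 2 := by
    simp [dotProduct, pow_two]
  have h2 : v ⬝ᵥ v = ∑ j, (v j) ^ 2 := by simp [dotProduct, pow_two]
  rw [h1, h2] at h
  simp only [smul_eq_mul] at h
  linarith

/-- operator bound passes to the transpose. -/
lemma opNorm_bound_transpose {E : Matrix (Fin d) (Fin d) ℝ} {S : ℝ}
    (hE : ∀ v : Fin d → ℝ, ∑ j, ((E *ᵥ v) j) ^ 2 ≤ S ^ 2 * ∑ j, (v j) ^ 2) :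
    ∀ v : Fin d → ℝ, ∑ j, ((Eᵀ *ᵥ v) j) ^ 2 ≤ S ^ 2 * ∑ j, (v j) ^ 2 := by
  intro v
  set w : Fin d → ℝ := Eᵀ *ᵥ v with hw
  set a : ℝ := ∑ j, (w j) ^ 2 with ha
  have ha0 : 0 ≤ a := Finset.sum_nonneg fun j _ => sq_nonneg _
  have hb0 : (0:ℝ) ≤ ∑ j, (v j) ^ 2 := Finset.sum_nonneg fun j _ => sq_nonneg _
  -- a = (E w) ⬝ᵥ v
  have hav : a = ∑ j, (E *ᵥ w) j * v j := by
    have : a = w ⬝ᵥ (Eᵀ *ᵥ v) := by simp [ha, hw, dotProduct, pow_two]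
    rw [this, Matrix.dotProduct_mulVec, Matrix.vecMul_transpose]
    simp [dotProduct]
  -- Cauchy–Schwarz
  have hcs : a ^ 2 ≤ (∑ j, ((E *ᵥ w) j) ^ 2) * ∑ j, (v j) ^ 2 := by
    rw [hav]
    exact Finset.sum_mul_sq_le_sq_mul_sq _ _ _
  have hEw : ∑ j, ((E *ᵥ w) j) ^ 2 ≤ S ^ 2 * a := hE w
  have h2 : a ^ 2 ≤ S ^ 2 * a * ∑ j, (v j) ^ 2 := by
    calc a ^ 2 ≤ (∑ j, ((E *ᵥ w) j) ^ 2) * ∑ j, (v j) ^ 2 := hcs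
      _ ≤ S ^ 2 * a * ∑ j, (v j) ^ 2 := by
          exact mul_le_mul_of_nonneg_right hEw hb0
  rcases eq_or_lt_of_le ha0 with h | h
  · rw [← h]; positivity
  · nlinarith

noncomputable def projMat (Δ : Matrix (Fin d) (Fin d) ℝ) : Matrix (Fin d) (Fin d) ℝ :=
  Matrix.toEuclideanLin.symm
    (((LinearMap.range (Matrix.toEuclideanLin Δ)).subtypeL ∘L
        Submodule.orthogonalProjection (LinearMap.range (Matrix.toEuclideanLin Δ)) :
      EuclideanSpace ℝ (Fin d) →L[ℝ] EuclideanSpace ℝ (Fin d)) :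
      EuclideanSpace ℝ (Fin d) →ₗ[ℝ] EuclideanSpace ℝ (Fin d))

lemma toEuclideanLin_projMat (Δ : Matrix (Fin d) (Fin d) ℝ) :
    Matrix.toEuclideanLin (projMat Δ) =
      (((LinearMap.range (Matrix.toEuclideanLin Δ)).subtypeL ∘L
        Submodule.orthogonalProjection (LinearMap.range (Matrix.toEuclideanLin Δ)) :
        EuclideanSpace ℝ (Fin d) →L[ℝ] EuclideanSpace ℝ (Fin d)) :
        EuclideanSpace ℝ (Fin d) →ₗ[ℝ] EuclideanSpace ℝ (Fin d)) :=
  LinearEquiv.apply_symm_apply _ _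

lemma toEuclideanLin_mul (A B : Matrix (Fin d) (Fin d) ℝ) :
    Matrix.toEuclideanLin (A * B) =
      (Matrix.toEuclideanLin A).comp (Matrix.toEuclideanLin B) := by
  rw [Matrix.toEuclideanLin_eq_toLin]
  exact Matrix.toLin_mul _ (PiLp.basisFun 2 ℝ (Fin d)) _ A B

lemma projMat_apply_mem (Δ : Matrix (Fin d) (Fin d) ℝ) (x : EuclideanSpace ℝ (Fin d)) :
    Matrix.toEuclideanLin (projMat Δ) x ∈ LinearMap.range (Matrix.toEuclideanLin Δ) := by
  rw [toEuclideanLin_projMat]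
  simp only [ContinuousLinearMap.coe_coe, ContinuousLinearMap.comp_apply,
    Submodule.subtypeL_apply]
  exact Submodule.coe_mem _

lemma projMat_fix (Δ : Matrix (Fin d) (Fin d) ℝ) (x : EuclideanSpace ℝ (Fin d))
    (hx : x ∈ LinearMap.range (Matrix.toEuclideanLin Δ)) :
    Matrix.toEuclideanLin (projMat Δ) x = x := by
  rw [toEuclideanLin_projMat]
  simp only [ContinuousLinearMap.coe_coe, ContinuousLinearMap.comp_apply,
    Submodule.subtypeL_apply]
  exact Submodule.starProjection_eq_self_iff.mpr hx

lemma projMat_idem (Δ : Matrix (Fin d) (Fin d) ℝ) : projMat Δ * projMat Δ = projMat Δ := by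
  apply Matrix.toEuclideanLin.injective
  rw [toEuclideanLin_mul]
  exact LinearMap.ext fun x => projMat_fix Δ _ (projMat_apply_mem Δ x)

lemma projMat_mul_self (Δ : Matrix (Fin d) (Fin d) ℝ) : projMat Δ * Δ = Δ := by
  apply Matrix.toEuclideanLin.injective
  rw [toEuclideanLin_mul]
  exact LinearMap.ext fun x => projMat_fix Δ _ (LinearMap.mem_range_self _ x)

lemma projMat_herm (Δ : Matrix (Fin d) (Fin d) ℝ) : (projMat Δ).IsHermitian := by
  rw [Matrix.isHermitian_iff_isSymmetric, toEuclideanLin_projMat]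
  exact Submodule.starProjection_isSymmetric (K := LinearMap.range (Matrix.toEuclideanLin Δ))

lemma projMat_transpose (Δ : Matrix (Fin d) (Fin d) ℝ) : (projMat Δ)ᵀ = projMat Δ := by
  have h := projMat_herm Δ
  rwa [Matrix.IsHermitian, Matrix.conjTranspose_eq_transpose_of_trivial] at h

lemma projMat_trace (Δ : Matrix (Fin d) (Fin d) ℝ) :
    (projMat Δ).trace = (Δ.rank : ℝ) := by
  set K := LinearMap.range (Matrix.toEuclideanLin Δ) with hK
  set f : EuclideanSpace ℝ (Fin d) →ₗ[ℝ] EuclideanSpace ℝ (Fin d) :=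
    ((K.subtypeL ∘L Submodule.orthogonalProjection K :
      EuclideanSpace ℝ (Fin d) →L[ℝ] EuclideanSpace ℝ (Fin d)) :
      EuclideanSpace ℝ (Fin d) →ₗ[ℝ] EuclideanSpace ℝ (Fin d)) with hf
  have hproj : LinearMap.IsProj K f := by
    constructor
    · intro x
      simp only [hf, ContinuousLinearMap.coe_coe, ContinuousLinearMap.comp_apply,
        Submodule.subtypeL_apply]
      exact Submodule.coe_mem _
    · intro x hx
      simp only [hf, ContinuousLinearMap.coe_coe, ContinuousLinearMap.comp_apply,
        Submodule.subtypeL_apply]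
      exact Submodule.starProjection_eq_self_iff.mpr hx
  have htr : LinearMap.trace ℝ _ f = (Module.finrank ℝ K : ℝ) := hproj.trace
  have hmat : projMat Δ = LinearMap.toMatrix
      (EuclideanSpace.basisFun (Fin d) ℝ).toBasis
      (EuclideanSpace.basisFun (Fin d) ℝ).toBasis f := by
    rw [← Matrix.toLin_symm, ← Matrix.toEuclideanLin_eq_toLin_orthonormal]
    rfl
  rw [hmat, ← LinearMap.trace_eq_matrix_trace, htr]
  have hrk : Δ.rank = Module.finrank ℝ K := by
    rw [Matrix.rank_eq_finrank_range_toLin Δ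
      (EuclideanSpace.basisFun (Fin d) ℝ).toBasis (EuclideanSpace.basisFun (Fin d) ℝ).toBasis]
    rfl
  rw [hrk]

end CKAHelpers

/-- Lower CKA similarity ρ forces a higher rank: if the optimal
linear aligner W* = Y Xᵀ (X Xᵀ)⁻¹ satisfies σ₁(W* − I) ≤ S and
‖W* − I‖_F² ≥ d·(1 − ρ)/(κ(XXᵀ)·κ(YYᵀ)), then any Δ with rank(Δ) ≤ r and
‖(W* − I) − Δ‖_F ≤ ε has r ≥ (d·(1 − ρ)/(κ(XXᵀ)·κ(YYᵀ)) − ε²)/S². -/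
theorem cka_rank_lower_bound
    {d n : ℕ} (hd : 0 < d) (X Y : Matrix (Fin d) (Fin n) ℝ)
    (hX : X ≠ 0) (hY : Y ≠ 0)
    (hXX : (X * Xᵀ).PosDef) (hYY : (Y * Yᵀ).PosDef)
    (S : ℝ) (hS : 0 < S)
    (hσ : singularValues (Y * Xᵀ * (X * Xᵀ)⁻¹ - 1) ⟨0, hd⟩ ≤ S)
    (hlow :
      (d : ℝ) *
          (1 - frobNorm (X * Yᵀ) ^ 2 / (frobNorm (X * Xᵀ) * frobNorm (Y * Yᵀ))) /
          (condNumber (X * Xᵀ) hXX.1 * condNumber (Y * Yᵀ) hYY.1) ≤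
        frobNorm (Y * Xᵀ * (X * Xᵀ)⁻¹ - 1) ^ 2) :
    ∀ ε > (0 : ℝ), ∀ (Δ : Matrix (Fin d) (Fin d) ℝ) (r : ℕ),
      Δ.rank ≤ r → frobNorm (Y * Xᵀ * (X * Xᵀ)⁻¹ - 1 - Δ) ≤ ε →
      ((d : ℝ) *
            (1 - frobNorm (X * Yᵀ) ^ 2 / (frobNorm (X * Xᵀ) * frobNorm (Y * Yᵀ))) /
            (condNumber (X * Xᵀ) hXX.1 * condNumber (Y * Yᵀ) hYY.1) -
          ε ^ 2) / S ^ 2 ≤ (r : ℝ) := by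

  intro ε hε Δ r hrank hfro
  set E : Matrix (Fin d) (Fin d) ℝ := Y * Xᵀ * (X * Xᵀ)⁻¹ - 1 with hE
  set C : ℝ := (d : ℝ) *
      (1 - frobNorm (X * Yᵀ) ^ 2 / (frobNorm (X * Xᵀ) * frobNorm (Y * Yᵀ))) /
      (condNumber (X * Xᵀ) hXX.1 * condNumber (Y * Yᵀ) hYY.1) with hC
  -- eigenvalue bound from the singular value hypothesis
  have hpsdA : (Eᵀ * E).PosSemidef := by
    rw [← Matrix.conjTranspose_eq_transpose_of_trivial]
    exact Matrix.posSemidef_conjTranspose_mul_self E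
  have hev : ∀ i, (Matrix.isHermitian_conjTranspose_mul_self E).eigenvalues i ≤ S ^ 2 := by
    intro i
    set f := (Matrix.isHermitian_conjTranspose_mul_self E).eigenvalues with hf
    have hnn : ∀ j, 0 ≤ f j := fun j => hpsdA.eigenvalues_nonneg j
    have hmono := Tuple.monotone_sort f
    have hle : ∀ k : Fin d, k ≤ (⟨0, hd⟩ : Fin d).rev := by
      intro k
      have hk := k.isLt
      rw [Fin.le_def, Fin.val_rev]
      show (k : ℕ) ≤ d - (0 + 1)
      omega
    have h1 : f i ≤ (f ∘ Tuple.sort f) ((⟨0, hd⟩ : Fin d).rev) := by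
      have h2 : f i = (f ∘ Tuple.sort f) ((Tuple.sort f)⁻¹ i) := by
        simp [Equiv.Perm.inv_def]
      rw [h2]
      exact hmono (hle _)
    have hσ' : Real.sqrt ((f ∘ Tuple.sort f) ((⟨0, hd⟩ : Fin d).rev)) ≤ S := hσ
    have hnn2 : 0 ≤ (f ∘ Tuple.sort f) ((⟨0, hd⟩ : Fin d).rev) := hnn _
    calc f i ≤ (f ∘ Tuple.sort f) ((⟨0, hd⟩ : Fin d).rev) := h1
      _ = Real.sqrt ((f ∘ Tuple.sort f) ((⟨0, hd⟩ : Fin d).rev)) ^ 2 :=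
          (Real.sq_sqrt hnn2).symm
      _ ≤ S ^ 2 := pow_le_pow_left₀ (Real.sqrt_nonneg _) hσ' 2
  have hEop := opNorm_bound hev
  have hETop := opNorm_bound_transpose hEop
  -- the projection matrix
  set P : Matrix (Fin d) (Fin d) ℝ := projMat Δ with hP
  have hPt : Pᵀ = P := projMat_transpose Δ
  have hPP : P * P = P := projMat_idem Δ
  have hPΔ : P * Δ = Δ := projMat_mul_self Δ
  have hfrobsq : ∀ M : Matrix (Fin d) (Fin d) ℝ,
      frobNorm M ^ 2 = ∑ i, ∑ j, (M i j) ^ 2 := by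
    intro M
    rw [frobNorm, Real.sq_sqrt]
    positivity
  -- sum of squares of entries of P equals its trace
  have hPsq : ∑ i, ∑ j, (P i j) ^ 2 = P.trace := by
    have h1 : ∑ i, ∑ j, (P i j) ^ 2 = ∑ i, ∑ j, P i j * P j i := by
      refine Finset.sum_congr rfl fun i _ => Finset.sum_congr rfl fun j _ => ?_
      have : P j i = Pᵀ i j := rfl
      rw [this, hPt]; ring
    have h2 : ∑ i, ∑ j, P i j * P j i = (P * P).trace := by
      rw [Matrix.trace]
      simp only [Matrix.diag, Matrix.mul_apply]
    rw [h1, h2, hPP]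
  -- bound on the residual part
  have hres : ∑ i, ∑ j, ((E - P * E) i j) ^ 2 ≤ ε ^ 2 := by
    have hEPE : E - P * E = (E - Δ) - P * (E - Δ) := by
      have h : P * (E - Δ) = P * E - Δ := by rw [Matrix.mul_sub, hPΔ]
      rw [h]
      abel
    have hpyth := pythag P hPt hPP (E - Δ)
    have hnn : 0 ≤ ∑ i, ∑ j, ((P * (E - Δ)) i j) ^ 2 := by positivity
    have hfr : ∑ i, ∑ j, ((E - Δ) i j) ^ 2 ≤ ε ^ 2 := by
      rw [← hfrobsq]
      have h0 : 0 ≤ frobNorm (E - Δ) := Real.sqrt_nonneg _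
      nlinarith
    rw [hEPE]
    linarith
  -- bound on the projected part
  have hproj : ∑ i, ∑ j, ((P * E) i j) ^ 2 ≤ S ^ 2 * (r : ℝ) := by
    have hrow : ∀ i, ∑ j, ((P * E) i j) ^ 2 = ∑ j, ((Eᵀ *ᵥ (fun k => P i k)) j) ^ 2 := by
      intro i
      refine Finset.sum_congr rfl fun j _ => ?_
      congr 1
      simp [Matrix.mul_apply, Matrix.mulVec, dotProduct, Matrix.transpose_apply,
        mul_comm]
    calc ∑ i, ∑ j, ((P * E) i j) ^ 2
        = ∑ i, ∑ j, ((Eᵀ *ᵥ (fun k => P i k)) j) ^ 2 :=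
          Finset.sum_congr rfl fun i _ => hrow i
      _ ≤ ∑ i, S ^ 2 * ∑ k, (P i k) ^ 2 :=
          Finset.sum_le_sum fun i _ => hETop (fun k => P i k)
      _ = S ^ 2 * ∑ i, ∑ k, (P i k) ^ 2 := by rw [Finset.mul_sum]
      _ = S ^ 2 * P.trace := by rw [hPsq]
      _ = S ^ 2 * (Δ.rank : ℝ) := by rw [projMat_trace]
      _ ≤ S ^ 2 * (r : ℝ) := by
          have : (Δ.rank : ℝ) ≤ (r : ℝ) := by exact_mod_cast hrank
          nlinarith [sq_nonneg S]
  -- assemble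
  have hkey : frobNorm E ^ 2 ≤ S ^ 2 * (r : ℝ) + ε ^ 2 := by
    rw [hfrobsq, pythag P hPt hPP E]
    linarith
  have hCle : C ≤ frobNorm E ^ 2 := hlow
  have hS2 : (0 : ℝ) < S ^ 2 := by positivity
  rw [div_le_iff₀ hS2]
  nlinarith
end
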